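/- Let H_1, H_2, H_3 be Hermitian operators, H = H_1 + H_2 + H_3, and let S_2(t) = e^{-itH_1/2} e^{-itH_2/2} e^{-itH_3} e^{-itH_2/2} e^{-itH_1/2} be the second-order Suzuki (Strang) formula. Then for all t ≥ 0, ‖S_2(t) − e^{-itH}‖ ≤ t³·( (1/24)‖[H_1,[H_2,H_1]]‖ + (1/8)‖[H_2,[H_2,H_1]]‖ + (1/12)‖[H_3,[H_2,H_1]]‖ + (1/24)‖[H_1,[H_3,H_1]]‖ + (1/12)‖[H_2,[H_3,H_1]]‖ + (1/12)‖[H_3,[H_3,H_1]]‖ + (1/24)‖[H_2,[H_3,H_2]]‖ + (1/12)‖[H_3,[H_3,H_2]]‖ ). -/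

import Mathlib

open NormedSpace

set_option maxHeartbeats 1000000
set_option linter.unusedSectionVars false

namespace TrotterAux

variable {E : Type*} [NormedAddCommGroup E] [InnerProductSpace ℂ E] [FiniteDimensional ℂ E]

noncomputable instance instNormedAlgebraRatCLM : NormedAlgebra ℚ (E →L[ℂ] E) :=
  NormedAlgebra.restrictScalars ℚ ℂ _

noncomputable def eR (M : E →L[ℂ] E) (u : ℝ) : E →L[ℂ] E := exp ((u : ℂ) • M)

lemma comp_ofReal' {F : Type*} [NormedAddCommGroup F] [NormedSpace ℂ F] {f : ℂ → F} {f' : F}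
    {u : ℝ} (hf : HasDerivAt f f' (u : ℂ)) : HasDerivAt (fun y : ℝ => f y) f' u := by
  simpa [Function.comp_def] using hf.scomp u Complex.ofRealCLM.hasDerivAt

lemma eR_hasDerivAt (M : E →L[ℂ] E) (u : ℝ) : HasDerivAt (eR M) (eR M u * M) u := by
  unfold eR; exact comp_ofReal' (hasDerivAt_exp_smul_const M (u : ℂ))

lemma eR_hasDerivAt' (M : E →L[ℂ] E) (u : ℝ) : HasDerivAt (eR M) (M * eR M u) u := by
  unfold eR; exact comp_ofReal' (hasDerivAt_exp_smul_const' M (u : ℂ))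

lemma eR_zero (M : E →L[ℂ] E) : eR M 0 = 1 := by simp [eR, exp_zero]

lemma eR_add (M : E →L[ℂ] E) (u v : ℝ) : eR M (u + v) = eR M u * eR M v := by
  have hc : ((u + v : ℝ) : ℂ) • M = (u : ℂ) • M + (v : ℂ) • M := by
    push_cast; rw [add_smul]
  rw [eR, eR, eR, hc]
  exact exp_add_of_commute (((Commute.refl M).smul_left _).smul_right _)

lemma eR_neg_eq (M : E →L[ℂ] E) (u : ℝ) : eR M (-u) = eR (-M) u := by
  rw [eR, eR]; norm_num

lemma eR_mul_neg (M : E →L[ℂ] E) (u : ℝ) : eR M u * eR M (-u) = 1 := by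
  rw [← eR_add, add_neg_cancel, eR_zero]

lemma eR_neg_mul (M : E →L[ℂ] E) (u : ℝ) : eR M (-u) * eR M u = 1 := by
  rw [← eR_add, neg_add_cancel, eR_zero]

lemma eR_continuous (M : E →L[ℂ] E) : Continuous (eR M) :=
  exp_continuous.comp (Complex.continuous_ofReal.smul continuous_const)

lemma norm_eR_le_one {M : E →L[ℂ] E} (hM : star M = -M) (u : ℝ) : ‖eR M u‖ ≤ 1 := by
  show ‖exp ((u : ℂ) • M)‖ ≤ 1
  have hskew : star ((u : ℂ) • M) = -((u : ℂ) • M) := by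
    rw [star_smul, hM, Complex.star_def, Complex.conj_ofReal, smul_neg]
  have h : exp ((u : ℂ) • M) ∈ unitary (E →L[ℂ] E) :=
    exp_mem_unitary_of_mem_skewAdjoint (skewAdjoint.mem_iff.mpr hskew)
  have h2 : star (exp ((u : ℂ) • M)) * exp ((u : ℂ) • M) = 1 := (Unitary.mem_iff.mp h).1
  have h3 : ‖exp ((u : ℂ) • M)‖ * ‖exp ((u : ℂ) • M)‖ =
      ‖star (exp ((u : ℂ) • M)) * exp ((u : ℂ) • M)‖ :=
    (CStarRing.norm_star_mul_self).symm
  rw [h2] at h3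
  have h4 : ‖(1 : E →L[ℂ] E)‖ ≤ 1 := ContinuousLinearMap.norm_id_le
  nlinarith [norm_nonneg (exp ((u : ℂ) • M))]

lemma star_neg' {M : E →L[ℂ] E} (hM : star M = -M) : star (-M) = -(-M) := by
  rw [star_neg, hM, neg_neg]

lemma norm_conj_le {a b : E →L[ℂ] E} (X : E →L[ℂ] E) (ha : ‖a‖ ≤ 1) (hb : ‖b‖ ≤ 1) :
    ‖a * X * b‖ ≤ ‖X‖ := by
  calc ‖a * X * b‖ ≤ ‖a * X‖ * ‖b‖ := norm_mul_le _ _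
    _ ≤ ‖a * X‖ := mul_le_of_le_one_right (norm_nonneg _) hb
    _ ≤ ‖a‖ * ‖X‖ := norm_mul_le _ _
    _ ≤ ‖X‖ := mul_le_of_le_one_left (norm_nonneg _) ha


lemma eR_comm (M : E →L[ℂ] E) (u : ℝ) : eR M u * M = M * eR M u :=
  (((Commute.refl M).smul_left ((u : ℂ))).exp_left)

noncomputable def Ad (M C : E →L[ℂ] E) (u : ℝ) : E →L[ℂ] E := eR M u * C * eR M (-u)

lemma Ad_continuous (M C : E →L[ℂ] E) : Continuous (Ad M C) :=
  ((eR_continuous M).mul continuous_const).mul ((eR_continuous M).comp continuous_neg)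

lemma Ad_hasDerivAt (M C : E →L[ℂ] E) (u : ℝ) :
    HasDerivAt (Ad M C) (Ad M ⁅M, C⁆ u) u := by
  have hfun : Ad M C = fun w => (eR M w * C) * eR (-M) w := by
    funext w; rw [Ad, eR_neg_eq]
  rw [hfun]
  have h1 : HasDerivAt (fun w => eR M w * C) (eR M u * M * C) u :=
    (eR_hasDerivAt M u).mul_const C
  have h2 := eR_hasDerivAt' (-M) u
  have h : HasDerivAt (fun w => (eR M w * C) * eR (-M) w) _ u := h1.mul h2
  convert h using 1
  rw [Ad, Ring.lie_def, eR_neg_eq]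
  have hc : eR M u * C * (-M * eR (-M) u) = -(eR M u * (C * M) * eR (-M) u) := by
    noncomm_ring
  rw [hc]
  have : eR M u * (M * C - C * M) * eR (-M) u
      = eR M u * M * C * eR (-M) u - eR M u * (C * M) * eR (-M) u := by noncomm_ring
  rw [this]; abel

lemma Ad_zero (M C : E →L[ℂ] E) : Ad M C 0 = C := by
  simp [Ad, eR_zero]

lemma Ad_sub_self (M C : E →L[ℂ] E) (s : ℝ) :
    Ad M C s - C = ∫ u in (0:ℝ)..s, Ad M ⁅M, C⁆ u := by
  rw [intervalIntegral.integral_eq_sub_of_hasDerivAt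
    (fun u _ => Ad_hasDerivAt M C u) ((Ad_continuous M _).intervalIntegrable 0 s), Ad_zero]

lemma norm_Ad_le {M : E →L[ℂ] E} (hM : star M = -M) (C : E →L[ℂ] E) (u : ℝ) :
    ‖Ad M C u‖ ≤ ‖C‖ :=
  norm_conj_le C (norm_eR_le_one hM u) (norm_eR_le_one hM (-u))

lemma norm_Ad_sub_self_le {M : E →L[ℂ] E} (hM : star M = -M) (C : E →L[ℂ] E) {u : ℝ}
    (hu : 0 ≤ u) : ‖Ad M C u - C‖ ≤ u * ‖⁅M, C⁆‖ := by
  rw [Ad_sub_self]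
  calc ‖∫ v in (0:ℝ)..u, Ad M ⁅M, C⁆ v‖ ≤ ‖⁅M, C⁆‖ * |u - 0| :=
        intervalIntegral.norm_integral_le_of_norm_le_const
          (fun v _ => norm_Ad_le hM _ v)
    _ = u * ‖⁅M, C⁆‖ := by rw [sub_zero, abs_of_nonneg hu, mul_comm]

lemma eR_conj_self (P : E →L[ℂ] E) (s : ℝ) : eR P s * P * eR P (-s) = P := by
  rw [eR_comm, mul_assoc, eR_mul_neg, mul_one]

lemma Ad_split (P C : E →L[ℂ] E) (u s : ℝ) :
    Ad P C s - Ad P C u = eR P u * (Ad P C (s - u) - C) * eR P (-u) := by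
  have h1 : eR P s = eR P u * eR P (s - u) := by rw [← eR_add]; ring_nf
  have h2 : eR P (-s) = eR P (-(s-u)) * eR P (-u) := by rw [← eR_add]; ring_nf
  rw [Ad, Ad, Ad, h1, h2]
  noncomm_ring

lemma G_bound (P Y : E →L[ℂ] E) (hP : star P = -P) (hY : star Y = -Y) {s : ℝ} (hs : 0 ≤ s) :
    ‖(Ad P Y s - Y) + (eR P s * Ad Y P s * eR P (-s) - P)‖
      ≤ s ^ 2 / 2 * ‖⁅Y, ⁅Y, P⁆⁆‖ + s ^ 2 / 2 * ‖⁅P, ⁅Y, P⁆⁆‖ := by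
  set C : E →L[ℂ] E := ⁅Y, P⁆ with hC
  -- rewrite second summand
  have hsecond : eR P s * Ad Y P s * eR P (-s) - P
      = eR P s * (Ad Y P s - P) * eR P (-s) := by
    rw [mul_sub, sub_mul, eR_conj_self]
  -- integral representations
  have h1 : Ad Y P s - P = ∫ v in (0:ℝ)..s, Ad Y C v := by
    have := Ad_sub_self Y P s
    rwa [← hC] at this
  have h2 : Ad P Y s - Y = ∫ u in (0:ℝ)..s, Ad P ⁅P, Y⁆ u := Ad_sub_self P Y s
  -- pull conjugation inside the integral
  have hpull : eR P s * (∫ v in (0:ℝ)..s, Ad Y C v) * eR P (-s)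
      = ∫ v in (0:ℝ)..s, eR P s * Ad Y C v * eR P (-s) := by
    have := (ContinuousLinearMap.mulLeftRight ℂ (E →L[ℂ] E) (eR P s)
        (eR P (-s))).intervalIntegral_comp_comm
      ((Ad_continuous Y C).intervalIntegrable 0 s : IntervalIntegrable _ MeasureTheory.volume 0 s)
    simpa [ContinuousLinearMap.mulLeftRight_apply] using this.symm
  -- combine into one integral
  have hcomb : (Ad P Y s - Y) + (eR P s * Ad Y P s * eR P (-s) - P)
      = ∫ u in (0:ℝ)..s, (Ad P ⁅P, Y⁆ u + eR P s * Ad Y C u * eR P (-s)) := by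
    rw [hsecond, h1, hpull, h2, intervalIntegral.integral_add
      ((Ad_continuous P _).intervalIntegrable 0 s)
      ((show Continuous fun u => eR P s * Ad Y C u * eR P (-s) from
        (((continuous_const).mul (Ad_continuous Y C)).mul continuous_const)).intervalIntegrable 0 s)]
  rw [hcomb]
  -- pointwise bound
  have hbound : ∀ u ∈ Set.Icc (0:ℝ) s,
      ‖Ad P ⁅P, Y⁆ u + eR P s * Ad Y C u * eR P (-s)‖
        ≤ u * ‖⁅Y, C⁆‖ + (s - u) * ‖⁅P, C⁆‖ := by
    intro u hu
    have key : Ad P ⁅P, Y⁆ u + eR P s * Ad Y C u * eR P (-s)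
        = eR P s * (Ad Y C u - C) * eR P (-s) + (Ad P C s - Ad P C u) := by
      have hPY : (⁅P, Y⁆ : E →L[ℂ] E) = -C := by rw [hC, Ring.lie_def, Ring.lie_def, neg_sub]
      have hAdneg : Ad P (-C) u = - Ad P C u := by
        simp [Ad, mul_neg, neg_mul]
      have hAds : eR P s * C * eR P (-s) = Ad P C s := rfl
      rw [hPY, hAdneg, mul_sub, sub_mul, hAds]
      abel
    rw [key]
    calc ‖eR P s * (Ad Y C u - C) * eR P (-s) + (Ad P C s - Ad P C u)‖
        ≤ ‖eR P s * (Ad Y C u - C) * eR P (-s)‖ + ‖Ad P C s - Ad P C u‖ := norm_add_le _ _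
      _ ≤ ‖Ad Y C u - C‖ + ‖Ad P C (s - u) - C‖ := by
          gcongr
          · exact norm_conj_le _ (norm_eR_le_one hP s) (norm_eR_le_one hP (-s))
          · rw [Ad_split]
            exact norm_conj_le _ (norm_eR_le_one hP u) (norm_eR_le_one hP (-u))
      _ ≤ u * ‖⁅Y, C⁆‖ + (s - u) * ‖⁅P, C⁆‖ := by
          gcongr
          · exact norm_Ad_sub_self_le hY C hu.1
          · exact norm_Ad_sub_self_le hP C (by linarith [hu.2])
  -- integrate the bound
  have hcont : Continuous fun u => Ad P ⁅P, Y⁆ u + eR P s * Ad Y C u * eR P (-s) :=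
    (Ad_continuous P _).add (((continuous_const).mul (Ad_continuous Y C)).mul continuous_const)
  calc ‖∫ u in (0:ℝ)..s, (Ad P ⁅P, Y⁆ u + eR P s * Ad Y C u * eR P (-s))‖
      ≤ ∫ u in (0:ℝ)..s, ‖Ad P ⁅P, Y⁆ u + eR P s * Ad Y C u * eR P (-s)‖ :=
        intervalIntegral.norm_integral_le_integral_norm hs
    _ ≤ ∫ u in (0:ℝ)..s, (u * ‖⁅Y, C⁆‖ + (s - u) * ‖⁅P, C⁆‖) := by
        apply intervalIntegral.integral_mono_on hs
          (hcont.norm.intervalIntegrable 0 s)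
          ((((continuous_id.mul continuous_const)).add
            (((continuous_const.sub continuous_id)).mul continuous_const)).intervalIntegrable 0 s)
        exact hbound
    _ = s ^ 2 / 2 * ‖⁅Y, C⁆‖ + s ^ 2 / 2 * ‖⁅P, C⁆‖ := by
        rw [intervalIntegral.integral_add, intervalIntegral.integral_mul_const,
          intervalIntegral.integral_mul_const, integral_id, intervalIntegral.integral_sub,
          intervalIntegral.integral_const, integral_id]
        · simp only [smul_eq_mul]; ring
        · exact (continuous_const.intervalIntegrable 0 s)
        · exact (continuous_id.intervalIntegrable 0 s)
        · exact ((continuous_id.mul continuous_const)).intervalIntegrable 0 s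
        · exact (((continuous_const.sub continuous_id)).mul continuous_const).intervalIntegrable 0 s
    _ ≤ s ^ 2 / 2 * ‖⁅Y, ⁅Y, P⁆⁆‖ + s ^ 2 / 2 * ‖⁅P, ⁅Y, P⁆⁆‖ := le_refl _

lemma key_alg (a b ai bi P Y : E →L[ℂ] E)
    (hai : ai * a = 1) (hbi : bi * b = 1)
    (haP : a * P = P * a) (hbY : b * Y = Y * b) :
    ((a * Y * ai - Y) + (a * (b * P * bi) * ai - P)) * (a * b * a)
      = ((a * P) * b + a * (b * Y)) * a + a * b * (a * P) - ((2:ℂ) • P + Y) * (a * b * a) := by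
  have cai : ∀ w : E →L[ℂ] E, ai * (a * w) = w := fun w => by rw [← mul_assoc, hai, one_mul]
  have cbi : ∀ w : E →L[ℂ] E, bi * (b * w) = w := fun w => by rw [← mul_assoc, hbi, one_mul]
  have haP' : ∀ w : E →L[ℂ] E, a * (P * w) = P * (a * w) := fun w => by
    rw [← mul_assoc, haP, mul_assoc]
  have hbY' : ∀ w : E →L[ℂ] E, b * (Y * w) = Y * (b * w) := fun w => by
    rw [← mul_assoc, hbY, mul_assoc]
  simp only [add_mul, sub_mul, smul_mul_assoc, two_smul, mul_assoc, cai, cbi]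
  simp only [haP, haP', hbY, hbY']
  abel

lemma norm_mul_le_one_left {a : E →L[ℂ] E} (X : E →L[ℂ] E) (ha : ‖a‖ ≤ 1) :
    ‖a * X‖ ≤ ‖X‖ :=
  (norm_mul_le _ _).trans (mul_le_of_le_one_left (norm_nonneg _) ha)

lemma norm_mul_le_one_right {a : E →L[ℂ] E} (X : E →L[ℂ] E) (ha : ‖a‖ ≤ 1) :
    ‖X * a‖ ≤ ‖X‖ :=
  (norm_mul_le _ _).trans (mul_le_of_le_one_right (norm_nonneg _) ha)

lemma strang_skew (P Y : E →L[ℂ] E) (hP : star P = -P) (hY : star Y = -Y) {t : ℝ}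
    (ht : 0 ≤ t) :
    ‖eR P t * eR Y t * eR P t - eR ((2:ℂ) • P + Y) t‖
      ≤ t ^ 3 / 6 * ‖⁅Y, ⁅Y, P⁆⁆‖ + t ^ 3 / 6 * ‖⁅P, ⁅Y, P⁆⁆‖ := by
  set Z : E →L[ℂ] E := (2:ℂ) • P + Y with hZ
  have hZskew : star Z = -Z := by
    simp [hZ, star_smul, hP, hY, neg_add]
    abel
  have hZnegskew : star (-Z) = -(-Z) := by rw [star_neg, hZskew, neg_neg]
  set S : ℝ → E →L[ℂ] E := fun s => eR P s * eR Y s * eR P s with hS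
  set G : ℝ → E →L[ℂ] E := fun s =>
    (Ad P Y s - Y) + (eR P s * Ad Y P s * eR P (-s) - P) with hG
  -- derivative of F := eR (-Z) * S
  have hF' : ∀ s : ℝ, HasDerivAt (fun s => eR (-Z) s * S s)
      (eR (-Z) s * (G s * S s)) s := by
    intro s
    have hDS : HasDerivAt S
        ((((eR P s * P) * eR Y s + eR P s * (eR Y s * Y)) * eR P s
          + eR P s * eR Y s * (eR P s * P))) s :=
      ((eR_hasDerivAt P s).mul (eR_hasDerivAt Y s)).mul (eR_hasDerivAt P s)
    have h : HasDerivAt (fun s => eR (-Z) s * S s) _ s := (eR_hasDerivAt (-Z) s).mul hDS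
    convert h using 1
    have hkey := key_alg (eR P s) (eR Y s) (eR P (-s)) (eR Y (-s)) P Y
      (eR_neg_mul P s) (eR_neg_mul Y s) (eR_comm P s) (eR_comm Y s)
    have hGS : G s * S s = (((eR P s * P) * eR Y s + eR P s * (eR Y s * Y)) * eR P s
          + eR P s * eR Y s * (eR P s * P)) - Z * S s := by
      rw [hG, hS]
      simp only [Ad]
      rw [hkey]
    rw [hGS, mul_sub]
    noncomm_ring
  -- FTC
  have hGcont : Continuous G := by
    apply Continuous.add
    · exact (Ad_continuous P Y).sub continuous_const
    · exact ((((eR_continuous P).mul (Ad_continuous Y P)).mul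
        ((eR_continuous P).comp continuous_neg)).sub continuous_const)
  have hScont : Continuous S :=
    ((eR_continuous P).mul (eR_continuous Y)).mul (eR_continuous P)
  have hintcont : Continuous fun s => eR (-Z) s * (G s * S s) :=
    (eR_continuous (-Z)).mul (hGcont.mul hScont)
  have hFTC : eR (-Z) t * S t - 1
      = ∫ s in (0:ℝ)..t, eR (-Z) s * (G s * S s) := by
    rw [intervalIntegral.integral_eq_sub_of_hasDerivAt (fun s _ => hF' s)
      (hintcont.intervalIntegrable 0 t)]
    simp [hS, eR_zero]
  -- relate to the goal
  have hfinal : eR P t * eR Y t * eR P t - eR Z t = eR Z t * (eR (-Z) t * S t - 1) := by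
    rw [mul_sub, ← mul_assoc, ← eR_neg_eq, eR_mul_neg, one_mul, mul_one, hS]
  rw [hfinal]
  have hb1 : ‖eR Z t * (eR (-Z) t * S t - 1)‖ ≤ ‖eR (-Z) t * S t - 1‖ :=
    norm_mul_le_one_left _ (norm_eR_le_one hZskew t)
  refine hb1.trans ?_
  rw [hFTC]
  have hSnorm : ∀ s : ℝ, ‖S s‖ ≤ 1 := by
    intro s
    rw [hS]
    calc ‖eR P s * eR Y s * eR P s‖ ≤ ‖eR P s * eR Y s‖ :=
          norm_mul_le_one_right _ (norm_eR_le_one hP s)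
      _ ≤ ‖eR Y s‖ := norm_mul_le_one_left _ (norm_eR_le_one hP s)
      _ ≤ 1 := norm_eR_le_one hY s
  calc ‖∫ s in (0:ℝ)..t, eR (-Z) s * (G s * S s)‖
      ≤ ∫ s in (0:ℝ)..t, ‖eR (-Z) s * (G s * S s)‖ :=
        intervalIntegral.norm_integral_le_integral_norm ht
    _ ≤ ∫ s in (0:ℝ)..t, (s ^ 2 / 2 * ‖⁅Y, ⁅Y, P⁆⁆‖ + s ^ 2 / 2 * ‖⁅P, ⁅Y, P⁆⁆‖) := by
        apply intervalIntegral.integral_mono_on ht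
          (hintcont.norm.intervalIntegrable 0 t)
          (((continuous_id.pow 2).div_const 2 |>.mul continuous_const).add
            (((continuous_id.pow 2).div_const 2).mul continuous_const) |>.intervalIntegrable 0 t)
        intro s hsmem
        calc ‖eR (-Z) s * (G s * S s)‖ ≤ ‖G s * S s‖ :=
              norm_mul_le_one_left _ (norm_eR_le_one hZnegskew s)
          _ ≤ ‖G s‖ := norm_mul_le_one_right _ (hSnorm s)
          _ ≤ s ^ 2 / 2 * ‖⁅Y, ⁅Y, P⁆⁆‖ + s ^ 2 / 2 * ‖⁅P, ⁅Y, P⁆⁆‖ :=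
              G_bound P Y hP hY hsmem.1
    _ = t ^ 3 / 6 * ‖⁅Y, ⁅Y, P⁆⁆‖ + t ^ 3 / 6 * ‖⁅P, ⁅Y, P⁆⁆‖ := by
        rw [intervalIntegral.integral_add, intervalIntegral.integral_mul_const,
          intervalIntegral.integral_mul_const]
        · rw [intervalIntegral.integral_div, integral_pow]
          push_cast
          ring
        · exact (((continuous_id.pow 2).div_const 2).mul continuous_const).intervalIntegrable 0 t
        · exact (((continuous_id.pow 2).div_const 2).mul continuous_const).intervalIntegrable 0 t
lemma skew_smul {A : E →L[ℂ] E} (hA : IsSelfAdjoint A) {z : ℂ} (hz : starRingEnd ℂ z = -z) :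
    star (z • A) = -(z • A) := by
  rw [star_smul, hA.star_eq, Complex.star_def, hz, neg_smul]

lemma lie_smul_smul (z w : ℂ) (A B : E →L[ℂ] E) :
    ⁅z • A, w • B⁆ = (z * w) • ⁅A, B⁆ := by
  simp only [Ring.lie_def, smul_mul_smul_comm, mul_comm w z, smul_sub]


end TrotterAux

open TrotterAux in
/-- **Trotter error bound (from Theorem 1 with `s = 3`) for the second-order Suzuki formula
with three Hermitian terms.** -/
theorem strang_error_bound_three_terms_general
    {E : Type*} [NormedAddCommGroup E] [InnerProductSpace ℂ E] [FiniteDimensional ℂ E]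
    (H₁ H₂ H₃ : E →L[ℂ] E)
    (hH₁ : IsSelfAdjoint H₁) (hH₂ : IsSelfAdjoint H₂) (hH₃ : IsSelfAdjoint H₃)
    (H : E →L[ℂ] E) (hH : H = H₁ + H₂ + H₃) :
    ∀ t : ℝ, 0 ≤ t →
      ‖exp ((-(Complex.I * t) / 2) • H₁) * exp ((-(Complex.I * t) / 2) • H₂) *
          exp ((-(Complex.I * t)) • H₃) * exp ((-(Complex.I * t) / 2) • H₂) *
          exp ((-(Complex.I * t) / 2) • H₁) - exp ((-(Complex.I * t)) • H)‖
        ≤ t ^ 3 * (1 / 24 * ‖⁅H₁, ⁅H₂, H₁⁆⁆‖ + 1 / 8 * ‖⁅H₂, ⁅H₂, H₁⁆⁆‖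
            + 1 / 12 * ‖⁅H₃, ⁅H₂, H₁⁆⁆‖ + 1 / 24 * ‖⁅H₁, ⁅H₃, H₁⁆⁆‖
            + 1 / 12 * ‖⁅H₂, ⁅H₃, H₁⁆⁆‖ + 1 / 12 * ‖⁅H₃, ⁅H₃, H₁⁆⁆‖
            + 1 / 24 * ‖⁅H₂, ⁅H₃, H₂⁆⁆‖ + 1 / 12 * ‖⁅H₃, ⁅H₃, H₂⁆⁆‖) := by
  intro t ht
  have hI3 : (Complex.I : ℂ) ^ 3 = -Complex.I := by
    rw [show (3:ℕ) = 2 + 1 from rfl, pow_succ, Complex.I_sq]; ring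
  set P₁ : E →L[ℂ] E := ((-Complex.I) / 2) • H₁ with hP₁def
  set P₂ : E →L[ℂ] E := ((-Complex.I) / 2) • H₂ with hP₂def
  set Y₃ : E →L[ℂ] E := (-Complex.I) • H₃ with hY₃def
  set W : E →L[ℂ] E := (-Complex.I) • (H₂ + H₃) with hWdef
  set Z : E →L[ℂ] E := (-Complex.I) • H with hZdef
  have hconj2 : starRingEnd ℂ ((-Complex.I) / 2) = -((-Complex.I) / 2) := by
    rw [map_div₀, map_neg, Complex.conj_I, Complex.conj_ofNat]
    ring
  have hconj1 : starRingEnd ℂ (-Complex.I) = -(-Complex.I) := by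
    simp [Complex.conj_I]
  have hP₁ : star P₁ = -P₁ := skew_smul hH₁ hconj2
  have hP₂ : star P₂ = -P₂ := skew_smul hH₂ hconj2
  have hY₃ : star Y₃ = -Y₃ := skew_smul hH₃ hconj1
  have hW : star W = -W := skew_smul (hH₂.add hH₃) hconj1
  -- exponent conversions
  have e1 : exp ((-(Complex.I * t) / 2) • H₁) = eR P₁ t := by
    rw [eR, smul_smul]; congr 1; ring
  have e2 : exp ((-(Complex.I * t) / 2) • H₂) = eR P₂ t := by
    rw [eR, smul_smul]; congr 1; ring
  have e3 : exp ((-(Complex.I * t)) • H₃) = eR Y₃ t := by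
    rw [eR, smul_smul]; congr 1; ring
  have eZ : exp ((-(Complex.I * t)) • H) = eR Z t := by
    rw [eR, smul_smul]; congr 1; ring
  have hWsum : (2:ℂ) • P₂ + Y₃ = W := by
    rw [hP₂def, hY₃def, hWdef, smul_smul,
      show (2 * (-Complex.I / 2) : ℂ) = -Complex.I by ring, ← smul_add]
  have hZsum : (2:ℂ) • P₁ + W = Z := by
    rw [hP₁def, hWdef, hZdef, hH, smul_smul,
      show (2 * (-Complex.I / 2) : ℂ) = -Complex.I by ring, ← smul_add, add_assoc]
  rw [e1, e2, e3, eZ]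
  set Q : E →L[ℂ] E := eR P₂ t * eR Y₃ t * eR P₂ t with hQ
  have hsplit : eR P₁ t * eR P₂ t * eR Y₃ t * eR P₂ t * eR P₁ t - eR Z t
      = eR P₁ t * (Q - eR W t) * eR P₁ t + (eR P₁ t * eR W t * eR P₁ t - eR Z t) := by
    rw [hQ]; noncomm_ring
  have hinner : ‖Q - eR W t‖
      ≤ t ^ 3 / 6 * ‖⁅Y₃, ⁅Y₃, P₂⁆⁆‖ + t ^ 3 / 6 * ‖⁅P₂, ⁅Y₃, P₂⁆⁆‖ := by
    have := strang_skew P₂ Y₃ hP₂ hY₃ ht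
    rwa [hWsum] at this
  have houter : ‖eR P₁ t * eR W t * eR P₁ t - eR Z t‖
      ≤ t ^ 3 / 6 * ‖⁅W, ⁅W, P₁⁆⁆‖ + t ^ 3 / 6 * ‖⁅P₁, ⁅W, P₁⁆⁆‖ := by
    have := strang_skew P₁ W hP₁ hW ht
    rwa [hZsum] at this
  -- commutator norm computations
  have hnYYP : ‖⁅Y₃, ⁅Y₃, P₂⁆⁆‖ = 1 / 2 * ‖⁅H₃, ⁅H₃, H₂⁆⁆‖ := by
    rw [hY₃def, hP₂def, lie_smul_smul, lie_smul_smul,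
      show (-Complex.I * (-Complex.I * (-Complex.I / 2)) : ℂ) = Complex.I / 2 by ring_nf; rw [hI3]; ring,
      norm_smul (Complex.I / 2) ⁅H₃, ⁅H₃, H₂⁆⁆]
    congr 1
    rw [norm_div, Complex.norm_I]
    norm_num
  have hnPYP : ‖⁅P₂, ⁅Y₃, P₂⁆⁆‖ = 1 / 4 * ‖⁅H₂, ⁅H₃, H₂⁆⁆‖ := by
    rw [hY₃def, hP₂def, lie_smul_smul, lie_smul_smul,
      show (-Complex.I / 2 * (-Complex.I * (-Complex.I / 2)) : ℂ) = Complex.I / 4 by ring_nf; rw [hI3]; ring,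
      norm_smul (Complex.I / 4) ⁅H₂, ⁅H₃, H₂⁆⁆]
    congr 1
    rw [norm_div, Complex.norm_I]
    norm_num
  have hnWWP : ‖⁅W, ⁅W, P₁⁆⁆‖ = 1 / 2 * ‖⁅H₂ + H₃, ⁅H₂ + H₃, H₁⁆⁆‖ := by
    rw [hWdef, hP₁def, lie_smul_smul, lie_smul_smul,
      show (-Complex.I * (-Complex.I * (-Complex.I / 2)) : ℂ) = Complex.I / 2 by ring_nf; rw [hI3]; ring,
      norm_smul (Complex.I / 2) ⁅H₂ + H₃, ⁅H₂ + H₃, H₁⁆⁆]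
    congr 1
    rw [norm_div, Complex.norm_I]
    norm_num
  have hnPWP : ‖⁅P₁, ⁅W, P₁⁆⁆‖ = 1 / 4 * ‖⁅H₁, ⁅H₂ + H₃, H₁⁆⁆‖ := by
    rw [hWdef, hP₁def, lie_smul_smul, lie_smul_smul,
      show (-Complex.I / 2 * (-Complex.I * (-Complex.I / 2)) : ℂ) = Complex.I / 4 by ring_nf; rw [hI3]; ring,
      norm_smul (Complex.I / 4) ⁅H₁, ⁅H₂ + H₃, H₁⁆⁆]
    congr 1
    rw [norm_div, Complex.norm_I]
    norm_num
  have hB1 : ‖⁅H₂ + H₃, ⁅H₂ + H₃, H₁⁆⁆‖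
      ≤ ‖⁅H₂, ⁅H₂, H₁⁆⁆‖ + ‖⁅H₂, ⁅H₃, H₁⁆⁆‖ + ‖⁅H₃, ⁅H₂, H₁⁆⁆‖ + ‖⁅H₃, ⁅H₃, H₁⁆⁆‖ := by
    have hexp : ⁅H₂ + H₃, ⁅H₂ + H₃, H₁⁆⁆
        = ⁅H₂, ⁅H₂, H₁⁆⁆ + ⁅H₂, ⁅H₃, H₁⁆⁆ + (⁅H₃, ⁅H₂, H₁⁆⁆ + ⁅H₃, ⁅H₃, H₁⁆⁆) := by
      simp only [Ring.lie_def]; noncomm_ring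
    rw [hexp]
    calc ‖⁅H₂, ⁅H₂, H₁⁆⁆ + ⁅H₂, ⁅H₃, H₁⁆⁆ + (⁅H₃, ⁅H₂, H₁⁆⁆ + ⁅H₃, ⁅H₃, H₁⁆⁆)‖
        ≤ ‖⁅H₂, ⁅H₂, H₁⁆⁆ + ⁅H₂, ⁅H₃, H₁⁆⁆‖ + ‖⁅H₃, ⁅H₂, H₁⁆⁆ + ⁅H₃, ⁅H₃, H₁⁆⁆‖ :=
          norm_add_le _ _
      _ ≤ ‖⁅H₂, ⁅H₂, H₁⁆⁆‖ + ‖⁅H₂, ⁅H₃, H₁⁆⁆‖ + (‖⁅H₃, ⁅H₂, H₁⁆⁆‖ + ‖⁅H₃, ⁅H₃, H₁⁆⁆‖) := by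
          gcongr <;> exact norm_add_le _ _
      _ = _ := by ring
  have hB2 : ‖⁅H₁, ⁅H₂ + H₃, H₁⁆⁆‖ ≤ ‖⁅H₁, ⁅H₂, H₁⁆⁆‖ + ‖⁅H₁, ⁅H₃, H₁⁆⁆‖ := by
    rw [show (⁅H₁, ⁅H₂ + H₃, H₁⁆⁆ : E →L[ℂ] E) = ⁅H₁, ⁅H₂, H₁⁆⁆ + ⁅H₁, ⁅H₃, H₁⁆⁆ by
      simp only [Ring.lie_def]; noncomm_ring]
    exact norm_add_le _ _
  -- put it together
  have hmain : ‖eR P₁ t * eR P₂ t * eR Y₃ t * eR P₂ t * eR P₁ t - eR Z t‖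
      ≤ ‖Q - eR W t‖ + ‖eR P₁ t * eR W t * eR P₁ t - eR Z t‖ := by
    rw [hsplit]
    refine (norm_add_le _ _).trans ?_
    gcongr
    exact norm_conj_le _ (norm_eR_le_one hP₁ t) (norm_eR_le_one hP₁ t)
  refine hmain.trans ?_
  have ht3 : (0:ℝ) ≤ t ^ 3 := pow_nonneg ht 3
  have h1 := hinner
  have h2 := houter
  rw [hnYYP, hnPYP] at h1
  rw [hnWWP, hnPWP] at h2
  nlinarith [norm_nonneg (⁅H₁, ⁅H₂, H₁⁆⁆ : E →L[ℂ] E), norm_nonneg (⁅H₂, ⁅H₂, H₁⁆⁆ : E →L[ℂ] E),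
    norm_nonneg (⁅H₃, ⁅H₂, H₁⁆⁆ : E →L[ℂ] E), norm_nonneg (⁅H₁, ⁅H₃, H₁⁆⁆ : E →L[ℂ] E),
    norm_nonneg (⁅H₂, ⁅H₃, H₁⁆⁆ : E →L[ℂ] E), norm_nonneg (⁅H₃, ⁅H₃, H₁⁆⁆ : E →L[ℂ] E),
    norm_nonneg (⁅H₂, ⁅H₃, H₂⁆⁆ : E →L[ℂ] E), norm_nonneg (⁅H₃, ⁅H₃, H₂⁆⁆ : E →L[ℂ] E),
    mul_nonneg ht3 (norm_nonneg (⁅H₂, ⁅H₂, H₁⁆⁆ : E →L[ℂ] E)),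
    mul_le_mul_of_nonneg_left hB1 (by positivity : (0:ℝ) ≤ t ^ 3 / 6 * (1/2)),
    mul_le_mul_of_nonneg_left hB2 (by positivity : (0:ℝ) ≤ t ^ 3 / 6 * (1/4))]
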